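/- Let u : Ω → R^3 be differentiable with |u| ≥ 1 pointwise, κ ∈ R, Π u = u/|u|, and define the helical derivative ∂_i^h v := ∂_i v + κ (v × e_i). Then pointwise for each i = 1,2, |∂_i^h (Π u)|^2 = (1/|u|^2) |∂_i u + κ u × e_i|^2 - (1/|u|^4) |u · ∂_i u|^2 ≤ |∂_i^h u|^2. -/

import Mathlib

open Matrix

lemma dP_eq (u : (Fin 2 → ℝ) → (Fin 3 → ℝ)) (x : Fin 2 → ℝ)
    (hdu : DifferentiableAt ℝ u x) (hpos : 0 < u x ⬝ᵥ u x) (v : Fin 2 → ℝ) :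
    fderiv ℝ (fun y => (Real.sqrt (u y ⬝ᵥ u y))⁻¹ • u y) x v =
      (Real.sqrt (u x ⬝ᵥ u x))⁻¹ • fderiv ℝ u x v
        + (-((u x ⬝ᵥ fderiv ℝ u x v) / (Real.sqrt (u x ⬝ᵥ u x))^3)) • u x := by
  set n := Real.sqrt (u x ⬝ᵥ u x) with hn
  have hn0 : 0 < n := Real.sqrt_pos.2 hpos
  set D := fderiv ℝ u x with hD
  have hU : HasFDerivAt u D x := hdu.hasFDerivAt
  have hcoord : ∀ j : Fin 3, HasFDerivAt (fun y => u y j)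
      ((ContinuousLinearMap.proj j).comp D) x := fun j =>
    ((ContinuousLinearMap.proj (R := ℝ) (φ := fun _ : Fin 3 => ℝ) j).hasFDerivAt).comp x hU
  have hF : HasFDerivAt (fun y => u y ⬝ᵥ u y)
      (∑ j : Fin 3, (u x j • ((ContinuousLinearMap.proj j).comp D)
        + u x j • ((ContinuousLinearMap.proj j).comp D))) x := by
    simp only [dotProduct]
    exact HasFDerivAt.fun_sum fun j _ => (hcoord j).mul (hcoord j)
  have hs : HasDerivAt Real.sqrt (1 / (2 * n)) (u x ⬝ᵥ u x) :=
    Real.hasDerivAt_sqrt (ne_of_gt hpos)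
  have hq : HasDerivAt (fun t => (Real.sqrt t)⁻¹) (-(n ^ 2)⁻¹ * (1 / (2 * n)))
      (u x ⬝ᵥ u x) := (hasDerivAt_inv (ne_of_gt hn0)).comp _ hs
  have hg : HasFDerivAt (fun y => (Real.sqrt (u y ⬝ᵥ u y))⁻¹)
      ((-(n ^ 2)⁻¹ * (1 / (2 * n))) • (∑ j : Fin 3,
        (u x j • ((ContinuousLinearMap.proj j).comp D)
          + u x j • ((ContinuousLinearMap.proj j).comp D)))) x :=
    HasDerivAt.comp_hasFDerivAt (h₂ := fun t => (Real.sqrt t)⁻¹) x hq hF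
  have hP := hg.fun_smul hU
  rw [hP.fderiv]
  simp only [ContinuousLinearMap.add_apply, ContinuousLinearMap.smul_apply,
    ContinuousLinearMap.smulRight_apply, ContinuousLinearMap.sum_apply,
    ContinuousLinearMap.comp_apply, ContinuousLinearMap.proj_apply, smul_eq_mul]
  have h2 : (∑ j : Fin 3, (u x j * D v j + u x j * D v j)) = 2 * (u x ⬝ᵥ D v) := by
    rw [dotProduct, Finset.mul_sum]
    exact Finset.sum_congr rfl fun j _ => by ring
  have : -(n ^ 2)⁻¹ * (1 / (2 * n)) * (2 * (u x ⬝ᵥ D v)) = -((u x ⬝ᵥ D v) / n ^ 3) := by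
    field_simp
  rw [h2, this]


lemma dotself_nonneg' (v : Fin 3 → ℝ) : 0 ≤ v ⬝ᵥ v :=
  Finset.sum_nonneg fun i _ => mul_self_nonneg _

theorem stmt_6 (Ω : Set (Fin 2 → ℝ)) (hΩ : IsOpen Ω)
    (u : (Fin 2 → ℝ) → (Fin 3 → ℝ)) (κ : ℝ)
    (hu : ∀ x ∈ Ω, DifferentiableAt ℝ u x)
    (hnorm : ∀ x ∈ Ω, 1 ≤ Real.sqrt (u x ⬝ᵥ u x))
    (x : Fin 2 → ℝ) (hx : x ∈ Ω) (i : Fin 2) :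
    let n : ℝ := Real.sqrt (u x ⬝ᵥ u x)
    let P : (Fin 2 → ℝ) → (Fin 3 → ℝ) := fun y => (Real.sqrt (u y ⬝ᵥ u y))⁻¹ • u y
    let E : (Fin 3 → ℝ) := Pi.single (Fin.castLE (by norm_num) i) 1
    let du : Fin 3 → ℝ := fderiv ℝ u x (Pi.single i 1)
    let dP : Fin 3 → ℝ := fderiv ℝ P x (Pi.single i 1)
    let hP : Fin 3 → ℝ := dP + κ • crossProduct (P x) E
    let hu' : Fin 3 → ℝ := du + κ • crossProduct (u x) E
    hP ⬝ᵥ hP = (1 / n^2) * (hu' ⬝ᵥ hu') - (1 / n^4) * (u x ⬝ᵥ du)^2 ∧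
      hP ⬝ᵥ hP ≤ hu' ⬝ᵥ hu' := by
  intro n P E du dP hP hu'
  have hn1 : 1 ≤ n := hnorm x hx
  have hn0 : 0 < n := lt_of_lt_of_le one_pos hn1
  have hpos : 0 < u x ⬝ᵥ u x := Real.sqrt_pos.1 hn0
  have hnn : u x ⬝ᵥ u x = n ^ 2 := (Real.sq_sqrt hpos.le).symm
  -- dP formula
  have hdP : dP = n⁻¹ • du + (-((u x ⬝ᵥ du) / n ^ 3)) • u x :=
    dP_eq u x (hu x hx) hpos (Pi.single i 1)
  set a : ℝ := u x ⬝ᵥ du with ha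
  set w : Fin 3 → ℝ := u x with hw
  -- hP = n⁻¹ • hu' + (-(a/n^3)) • w
  have hcross : crossProduct (P x) E = n⁻¹ • crossProduct w E := by
    show crossProduct (n⁻¹ • w) E = _
    simp [LinearMap.map_smul]
  have hhP : hP = n⁻¹ • hu' + (-(a / n ^ 3)) • w := by
    show dP + κ • crossProduct (P x) E = _
    rw [hdP, hcross]
    show n⁻¹ • du + (-(a / n ^ 3)) • w + κ • n⁻¹ • crossProduct w E
      = n⁻¹ • (du + κ • crossProduct w E) + (-(a / n ^ 3)) • w
    rw [smul_add, smul_comm κ n⁻¹]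
    abel
  have hwc : w ⬝ᵥ crossProduct w E = 0 := dot_self_cross w E
  have hwu : w ⬝ᵥ hu' = a := by
    show w ⬝ᵥ (du + κ • crossProduct w E) = a
    rw [dotProduct_add, dotProduct_smul, hwc, smul_zero, add_zero]
  have huw : hu' ⬝ᵥ w = a := by rw [dotProduct_comm]; exact hwu
  have hexp : hP ⬝ᵥ hP = (1 / n^2) * (hu' ⬝ᵥ hu') - (1 / n^4) * a ^ 2 := by
    rw [hhP]
    simp only [add_dotProduct, dotProduct_add, smul_dotProduct, dotProduct_smul,
      smul_eq_mul]
    rw [huw, hwu, hnn]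
    field_simp
    ring
  have hb : 0 ≤ hu' ⬝ᵥ hu' := dotself_nonneg' _
  refine ⟨hexp, ?_⟩
  rw [hexp]
  have hc : (1:ℝ) / n ^ 2 ≤ 1 := by
    rw [div_le_one (by positivity)]
    nlinarith
  nlinarith [mul_nonneg hb (sub_nonneg.2 hc),
    mul_nonneg (le_of_lt (show (0:ℝ) < 1 / n ^ 4 by positivity)) (sq_nonneg a)]
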